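/- For every nonnegative integer n, the function g(u) := e^{|u|} ∫_{-∞}^{∞} |v|^n e^{-|v| - |v+u|} dv satisfies g(u) = O(|u|^{n+1}) as |u| → ∞. More precisely, for u ≥ 0 one has g(u) = (n!/2^{n+1}) ∑_{j=0}^{n} (2^j/j!) u^j + u^{n+1}/(n+1) + n!/2^{n+1}, and g is an even function of u. -/

import Mathlib

open MeasureTheory Filter Asymptotics Topology
open Set Real

lemma Kval (m : ℕ) : ∫ x in Set.Ioi (0:ℝ), x ^ m * Real.exp (-(2*x)) = m.factorial / 2 ^ (m+1) := by
  have h := Real.integral_rpow_mul_exp_neg_mul_Ioi (a := (m:ℝ)+1) (r := 2) (by positivity) two_pos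
  rw [show ((m:ℝ)+1) - 1 = (m:ℝ) by ring] at h
  simp_rw [Real.rpow_natCast] at h
  rw [h, Real.Gamma_nat_eq_factorial, show ((m:ℝ)+1) = ((m+1:ℕ):ℝ) by push_cast; ring,
    Real.rpow_natCast, div_pow, one_pow, div_mul_eq_mul_div, one_mul]

lemma Kint (m : ℕ) : IntegrableOn (fun x : ℝ => x ^ m * Real.exp (-(2*x))) (Set.Ioi 0) := by
  have h := integrableOn_rpow_mul_exp_neg_mul_rpow (p := 1) (s := (m:ℝ)) (b := 2)
    (by exact_mod_cast neg_one_lt_zero.trans_le (Nat.cast_nonneg m)) one_pos two_pos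
  simp_rw [Real.rpow_one, Real.rpow_natCast, neg_mul] at h
  exact h

lemma shiftIoi (u : ℝ) (h : ℝ → ℝ) :
    ∫ x in Set.Ioi u, h x = ∫ x in Set.Ioi (0:ℝ), h (x + u) := by
  have A : MeasurableEmbedding (fun x : ℝ => x + u) :=
    (Homeomorph.addRight u).isClosedEmbedding.measurableEmbedding
  have := A.setIntegral_map (μ := volume) h (Set.Ioi u)
  rw [map_add_right_eq_self volume u] at this
  rw [this]
  congr 1
  ext x
  simp [Set.mem_preimage]

lemma domInt (n : ℕ) : Integrable (fun v : ℝ => |v| ^ n * Real.exp (-|v|)) := by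
  have h1 : IntegrableOn (fun v : ℝ => |v| ^ n * Real.exp (-|v|)) (Set.Ioi 0) := by
    have h := integrableOn_rpow_mul_exp_neg_mul_rpow (p := 1) (s := (n:ℝ)) (b := 1)
      (by exact_mod_cast neg_one_lt_zero.trans_le (Nat.cast_nonneg n)) one_pos one_pos
    simp_rw [Real.rpow_one, Real.rpow_natCast, neg_mul, one_mul] at h
    exact h.congr_fun (fun x hx => by
      rw [abs_of_pos (show (0:ℝ) < x from hx)]) measurableSet_Ioi
  have h2 : IntegrableOn (fun v : ℝ => |v| ^ n * Real.exp (-|v|)) (Set.Iic 0) := by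
    have m : MeasurableEmbedding (Neg.neg : ℝ → ℝ) := (Homeomorph.neg ℝ).measurableEmbedding
    have key : IntegrableOn (fun v : ℝ => |v| ^ n * Real.exp (-|v|)) (Set.Iic 0)
        (Measure.map Neg.neg volume) := by
      rw [m.integrableOn_map_iff]
      simp_rw [Function.comp_def, abs_neg, Set.neg_preimage, Set.neg_Iic, neg_zero]
      exact Iff.mpr integrableOn_Ici_iff_integrableOn_Ioi h1
    rwa [Measure.map_neg_eq_self] at key
  rw [← integrableOn_univ, ← Set.Iic_union_Ioi (a := (0:ℝ))]
  exact h2.union h1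

lemma intF (n : ℕ) (u : ℝ) :
    Integrable (fun v : ℝ => |v| ^ n * Real.exp (-|v| - |v + u|)) := by
  refine (domInt n).mono' ?_ (ae_of_all _ fun v => ?_)
  · apply AEStronglyMeasurable.mul
    · exact ((measurable_abs.pow_const n).aestronglyMeasurable)
    · exact (Real.measurable_exp.comp ((measurable_abs.neg).sub
        ((measurable_id.add_const u).abs))).aestronglyMeasurable
  · rw [Real.norm_eq_abs, abs_mul, abs_pow, abs_abs, Real.abs_exp]
    refine mul_le_mul_of_nonneg_left (Real.exp_le_exp.2 ?_) (by positivity)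
    have := abs_nonneg (v + u)
    linarith

lemma sumAlg (n : ℕ) (u : ℝ) :
    ∑ k ∈ Finset.range (n+1), u ^ (n-k) * (n.choose k : ℝ) * ((k.factorial : ℝ) / 2 ^ (k+1))
    = (n.factorial : ℝ) / 2 ^ (n+1) *
        ∑ j ∈ Finset.range (n+1), 2 ^ j / (j.factorial : ℝ) * u ^ j := by
  rw [Finset.mul_sum, ← Finset.sum_range_reflect]
  refine Finset.sum_congr rfl fun j hj => ?_
  have hjn : j ≤ n := Nat.lt_succ_iff.mp (Finset.mem_range.mp hj)
  simp only [Nat.add_sub_cancel]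
  rw [Nat.sub_sub_self hjn, Nat.choose_symm hjn]
  have hfac : ((n.choose j : ℝ)) * j.factorial * (n-j).factorial = n.factorial := by
    exact_mod_cast Nat.choose_mul_factorial_mul_factorial hjn
  have h2 : (2:ℝ) ^ (n-j+1) * 2 ^ j = 2 ^ (n+1) := by
    rw [← pow_add]; congr 1; omega
  have hj0 : ((j.factorial : ℝ)) ≠ 0 := Nat.cast_ne_zero.mpr j.factorial_ne_zero
  have h2j : ((2:ℝ)) ^ (n-j+1) ≠ 0 := by positivity
  have h2n : ((2:ℝ)) ^ (n+1) ≠ 0 := by positivity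
  field_simp
  rw [← hfac, ← h2]
  ring

lemma mainCalc (n : ℕ) (u : ℝ) (hu : 0 ≤ u) :
    ∫ v : ℝ, |v| ^ n * Real.exp (-|v| - |v + u|)
    = Real.exp (-u) * ((n.factorial : ℝ) / 2 ^ (n + 1) *
          ∑ j ∈ Finset.range (n + 1), 2 ^ j / (j.factorial : ℝ) * u ^ j
        + u ^ (n + 1) / (n + 1) + (n.factorial : ℝ) / 2 ^ (n + 1)) := by
  set F : ℝ → ℝ := fun v => |v| ^ n * Real.exp (-|v| - |v + u|) with hF
  have hInt : Integrable F := intF n u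
  have hsplit1 : ∫ v : ℝ, F v = (∫ v in Set.Iic (0:ℝ), F v) + ∫ v in Set.Ioi (0:ℝ), F v :=
    (intervalIntegral.integral_Iic_add_Ioi hInt.integrableOn hInt.integrableOn).symm
  have hsplit2 : (∫ v in Set.Iic (0:ℝ), F v)
      = (∫ v in Set.Iic (-u), F v) + ∫ v in Set.Ioc (-u) (0:ℝ), F v := by
    rw [← setIntegral_union (Set.Iic_disjoint_Ioc le_rfl) measurableSet_Ioc
      hInt.integrableOn hInt.integrableOn, Set.Iic_union_Ioc_eq_Iic (neg_nonpos.2 hu)]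
  have hA : ∫ v in Set.Ioi (0:ℝ), F v = Real.exp (-u) * ((n.factorial : ℝ) / 2 ^ (n+1)) := by
    rw [setIntegral_congr_fun measurableSet_Ioi
      (show Set.EqOn F (fun v => Real.exp (-u) * (v ^ n * Real.exp (-(2*v)))) (Set.Ioi 0) by
        intro v hv
        have h0 : (0:ℝ) < v := hv
        simp only [hF, abs_of_pos h0, abs_of_pos (by linarith : (0:ℝ) < v + u)]
        rw [mul_comm (Real.exp (-u)), mul_assoc, ← Real.exp_add]
        congr 2
        ring)]
    rw [integral_const_mul, Kval n]
  have hB : ∫ v in Set.Ioc (-u) (0:ℝ), F v = Real.exp (-u) * (u ^ (n+1) / (n+1)) := by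
    rw [setIntegral_congr_fun measurableSet_Ioc
      (show Set.EqOn F (fun v => Real.exp (-u) * (-v) ^ n) (Set.Ioc (-u) 0) by
        intro v hv
        obtain ⟨hv1, hv2⟩ := hv
        simp only [hF, abs_of_nonpos hv2, abs_of_nonneg (by linarith : (0:ℝ) ≤ v + u)]
        rw [mul_comm]
        congr 1
        rw [show -(-v) - (v + u) = -u by ring])]
    rw [integral_const_mul]
    congr 1
    rw [← intervalIntegral.integral_of_le (neg_nonpos.2 hu)]
    have := intervalIntegral.integral_comp_neg (a := -u) (b := 0) (fun x : ℝ => x ^ n)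
    simp only [neg_zero, neg_neg] at this
    rw [this, integral_pow]
    simp
  have hC : ∫ v in Set.Iic (-u), F v
      = Real.exp (-u) * ((n.factorial : ℝ) / 2 ^ (n+1) *
          ∑ j ∈ Finset.range (n+1), 2 ^ j / (j.factorial : ℝ) * u ^ j) := by
    rw [setIntegral_congr_fun measurableSet_Iic
      (show Set.EqOn F (fun v => (fun x => x ^ n * Real.exp (-(2*x) + u)) (-v)) (Set.Iic (-u)) by
        intro v hv
        have hv' : v ≤ -u := hv
        simp only [hF, abs_of_nonpos (by linarith : v ≤ 0),
          abs_of_nonpos (by linarith : v + u ≤ 0)]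
        congr 1
        ring_nf)]
    rw [integral_comp_neg_Iic (-u) (fun x => x ^ n * Real.exp (-(2*x) + u)), neg_neg, shiftIoi]
    have hcong : Set.EqOn (fun x : ℝ => (x + u) ^ n * Real.exp (-(2*(x + u)) + u))
        (fun x : ℝ => ∑ k ∈ Finset.range (n+1),
          (Real.exp (-u) * (u ^ (n-k) * (n.choose k : ℝ))) * (x ^ k * Real.exp (-(2*x))))
        (Set.Ioi 0) := by
      intro x _
      simp only
      rw [add_pow, Finset.sum_mul]
      refine Finset.sum_congr rfl fun k _ => ?_
      rw [show -(2*(x+u)) + u = -(2*x) + -u by ring, Real.exp_add]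
      ring
    rw [setIntegral_congr_fun measurableSet_Ioi hcong]
    rw [integral_finset_sum _ (fun k _ => ((Kint k).const_mul _))]
    have : ∀ k ∈ Finset.range (n+1),
        ∫ x in Set.Ioi (0:ℝ),
          (Real.exp (-u) * (u ^ (n-k) * (n.choose k : ℝ))) * (x ^ k * Real.exp (-(2*x)))
        = Real.exp (-u) * (u ^ (n-k) * (n.choose k : ℝ) * ((k.factorial : ℝ) / 2 ^ (k+1))) := by
      intro k _
      rw [integral_const_mul, Kval k]
      ring
    rw [Finset.sum_congr rfl this, ← Finset.mul_sum]
    congr 1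
    rw [← sumAlg n u]
  rw [hsplit1, hsplit2, hA, hB, hC]
  ring

theorem stmt0 (n : ℕ)
    (g : ℝ → ℝ)
    (hg : ∀ u : ℝ, g u = Real.exp |u| * ∫ v : ℝ, |v| ^ n * Real.exp (-|v| - |v + u|)) :
    (∀ u : ℝ, g (-u) = g u) ∧
    (∀ u : ℝ, 0 ≤ u →
      g u = (n.factorial : ℝ) / 2 ^ (n + 1) *
              ∑ j ∈ Finset.range (n + 1), 2 ^ j / (j.factorial : ℝ) * u ^ j
            + u ^ (n + 1) / (n + 1) + (n.factorial : ℝ) / 2 ^ (n + 1)) ∧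
    g =O[Bornology.cobounded ℝ] fun u => |u| ^ (n + 1) := by
  have heven : ∀ u : ℝ, g (-u) = g u := by
    intro u
    rw [hg, hg, abs_neg]
    congr 1
    rw [← integral_neg_eq_self (fun v : ℝ => |v| ^ n * Real.exp (-|v| - |v + u|)) volume]
    congr 1
    funext v
    simp only [abs_neg]
    congr 3
    rw [show -v + u = -(v + -u) by ring, abs_neg]
  have hval : ∀ u : ℝ, 0 ≤ u →
      g u = (n.factorial : ℝ) / 2 ^ (n + 1) *
              ∑ j ∈ Finset.range (n + 1), 2 ^ j / (j.factorial : ℝ) * u ^ j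
            + u ^ (n + 1) / (n + 1) + (n.factorial : ℝ) / 2 ^ (n + 1) := by
    intro u hu
    rw [hg, mainCalc n u hu, abs_of_nonneg hu, ← mul_assoc, ← Real.exp_add, add_neg_cancel,
      Real.exp_zero, one_mul]
  refine ⟨heven, hval, ?_⟩
  set A : ℝ := (n.factorial : ℝ) / 2 ^ (n + 1) with hA
  set S : ℝ := ∑ j ∈ Finset.range (n + 1), (2:ℝ) ^ j / (j.factorial : ℝ) with hS
  have hAnn : 0 ≤ A := by positivity
  have hSnn : 0 ≤ S := Finset.sum_nonneg fun j _ => by positivity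
  rw [isBigO_iff]
  refine ⟨A * S + 1 / (n + 1) + A, ?_⟩
  filter_upwards [eventually_cobounded_le_norm 1] with u hu1
  rw [Real.norm_eq_abs] at hu1
  have hgu : g u = g |u| := by
    rcases abs_cases u with ⟨h, _⟩ | ⟨h, _⟩
    · rw [h]
    · rw [h, heven u]
  have hf := hval |u| (abs_nonneg u)
  set t : ℝ := |u| ^ (n + 1) with ht
  have h1t : (1:ℝ) ≤ t := one_le_pow₀ hu1
  have hSum : ∑ j ∈ Finset.range (n + 1), 2 ^ j / (j.factorial : ℝ) * |u| ^ j ≤ S * t := by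
    rw [hS, Finset.sum_mul]
    refine Finset.sum_le_sum fun j hj => ?_
    refine mul_le_mul_of_nonneg_left ?_ (by positivity)
    exact pow_le_pow_right₀ hu1 (by have := Finset.mem_range.mp hj; omega : j ≤ n + 1)
  have hnn : 0 ≤ g |u| := by
    rw [hf]
    have h0 : 0 ≤ ∑ j ∈ Finset.range (n + 1), 2 ^ j / (j.factorial : ℝ) * |u| ^ j :=
      Finset.sum_nonneg fun j _ => by positivity
    positivity
  have key : |g u| ≤ (A * S + 1 / (n + 1) + A) * t := by
    rw [hgu, abs_of_nonneg hnn, hf]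
    have e1 : A * (∑ j ∈ Finset.range (n + 1), 2 ^ j / (j.factorial : ℝ) * |u| ^ j)
        ≤ A * (S * t) := mul_le_mul_of_nonneg_left hSum hAnn
    have e3 : A ≤ A * t := le_mul_of_one_le_right hAnn h1t
    have e2 : t / (n + 1) = 1 / (n + 1) * t := by ring
    have hn1 : (0:ℝ) < (n:ℝ) + 1 := by positivity
    nlinarith [mul_nonneg (mul_nonneg hAnn hSnn) (le_trans zero_le_one h1t)]
  calc ‖g u‖ = |g u| := rfl
    _ ≤ (A * S + 1 / (n + 1) + A) * t := key
    _ = (A * S + 1 / (n + 1) + A) * ‖|u| ^ (n + 1)‖ := by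
        rw [Real.norm_eq_abs, abs_of_nonneg (by positivity)]
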